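/- For every natural number n ≥ 1 and every natural number y, one has y ≤ 2^(2^n) if and only if there exist natural numbers y₁, y₂, y₄ with y₁ ≤ 2^(2^(n-1)), y₄ ≤ 2^(2^(n-1)), y₂ < y₁, and y = y₁ * y₂ + y₄. -/

import Mathlib

theorem bounded_mul_decomposition (n : ℕ) (hn : 1 ≤ n) (y : ℕ) :
    y ≤ 2 ^ (2 ^ n) ↔
      ∃ y₁ y₂ y₄ : ℕ, y₁ ≤ 2 ^ (2 ^ (n - 1)) ∧ y₄ ≤ 2 ^ (2 ^ (n - 1)) ∧
        y₂ < y₁ ∧ y = y₁ * y₂ + y₄ := by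
  set B := 2 ^ (2 ^ (n - 1)) with hB
  have hBpos : 0 < B := Nat.pow_pos (by norm_num)
  have hBB : B ≤ B * B := Nat.le_mul_of_pos_left _ hBpos
  have hsq : 2 ^ (2 ^ n) = B * B := by
    rw [hB, ← pow_add, ← two_mul]
    congr 1
    rw [← pow_succ']
    congr 1
    omega
  rw [hsq]
  constructor
  · intro hy
    rcases eq_or_lt_of_le hy with h | h
    · refine ⟨B, B - 1, B, le_refl _, le_refl _, Nat.sub_lt hBpos one_pos, ?_⟩
      rw [Nat.mul_sub_one]
      omega
    · exact ⟨B, y / B, y % B, le_refl _, (Nat.mod_lt _ hBpos).le,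
        Nat.div_lt_of_lt_mul h, (Nat.div_add_mod y B).symm⟩
  · rintro ⟨y₁, y₂, y₄, h1, h4, h21, rfl⟩
    calc y₁ * y₂ + y₄ ≤ B * (B - 1) + B :=
          add_le_add (Nat.mul_le_mul h1 (by omega)) h4
      _ = B * B := by rw [Nat.mul_sub_one]; omega
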